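/- arXiv:2509.02103 — 2 statements merged into one kernel-verified Lean document; each statement's English description precedes it below -/
import Mathlib

section
/- Let v ∈ [0,1] and N ∈ ℕ, and define f_θ(v,N) = 1 if v = 0 or N = 0; f_θ(v,N) = v^{θ-1}(1-v)^{N-θ}/B(θ, N-θ+1) if v ≠ 0 and N > θ; and f_θ(v,N) = N v^{N-1} otherwise. Then the function θ ↦ f_θ(v,N) is upper semi-continuous on (0, ∞). -/
open MeasureTheory Real Set

noncomputable def betaFun (a b : ℝ) : ℝ := ∫ v in (0:ℝ)..1, v ^ (a - 1) * (1 - v) ^ (b - 1)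

/-- Extended Beta-density parametrization `f_θ(v, N)`. -/
noncomputable def fExt (θ : ℝ) (v : ℝ) (N : ℕ) : ℝ :=
  if v = 0 ∨ N = 0 then 1
  else if θ < (N : ℝ) then v ^ (θ - 1) * (1 - v) ^ ((N:ℝ) - θ) / betaFun θ ((N:ℝ) - θ + 1)
  else (N : ℝ) * v ^ ((N:ℝ) - 1)

lemma betaFun_eq {a b : ℝ} (ha : 0 < a) (hb : 0 < b) :
    betaFun a b = Real.Gamma a * Real.Gamma b / Real.Gamma (a + b) := by
  have hc : Complex.betaIntegral (a : ℂ) (b : ℂ) = ((betaFun a b : ℝ) : ℂ) := by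
    rw [Complex.betaIntegral, betaFun, ← intervalIntegral.integral_ofReal]
    refine intervalIntegral.integral_congr fun x hx => ?_
    rw [Set.uIcc_of_le (by norm_num : (0:ℝ) ≤ 1)] at hx
    have hx0 : (0:ℝ) ≤ x := hx.1
    have hx1 : (0:ℝ) ≤ 1 - x := by linarith [hx.2]
    rw [Complex.ofReal_mul, Complex.ofReal_cpow hx0, Complex.ofReal_cpow hx1]
    push_cast
    ring
  have key := Complex.Gamma_mul_Gamma_eq_betaIntegral
    (s := (a : ℂ)) (t := (b : ℂ)) (by simpa using ha) (by simpa using hb)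
  rw [hc, Complex.Gamma_ofReal, Complex.Gamma_ofReal, show ((a:ℂ) + b) = ((a + b : ℝ) : ℂ) by
    push_cast; ring, Complex.Gamma_ofReal, ← Complex.ofReal_mul, ← Complex.ofReal_mul] at key
  have key' : Real.Gamma a * Real.Gamma b = Real.Gamma (a + b) * betaFun a b :=
    Complex.ofReal_inj.mp key
  have hG : Real.Gamma (a + b) ≠ 0 := (Real.Gamma_pos_of_pos (by linarith)).ne'
  field_simp [key']
  rw [key']; ring

lemma continuousAt_Gamma' {x : ℝ} (hx : 0 < x) : ContinuousAt Real.Gamma x := by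
  refine (Real.differentiableAt_Gamma fun m => ?_).continuousAt
  have : (-(m:ℝ)) ≤ 0 := neg_nonpos.mpr (Nat.cast_nonneg m)
  linarith

lemma usc_congr {f g : ℝ → ℝ} {s : Set ℝ} {x : ℝ} (h : f =ᶠ[nhdsWithin x s] g)
    (hx : f x = g x) (hg : UpperSemicontinuousWithinAt g s x) :
    UpperSemicontinuousWithinAt f s x := by
  intro y hy
  filter_upwards [h, hg y (by show g x < y; rw [← hx]; exact hy)] with θ hθ hθ'
  rw [hθ]; exact hθ'

theorem upperSemicontinuousOn_fExt (v : ℝ) (hv : v ∈ Set.Icc (0:ℝ) 1) (N : ℕ) :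
    UpperSemicontinuousOn (fun θ : ℝ => fExt θ v N) (Set.Ioi (0:ℝ)) := by
  by_cases hbase : v = 0 ∨ N = 0
  · have : (fun θ : ℝ => fExt θ v N) = fun _ => 1 := by
      funext θ; simp [fExt, hbase]
    rw [this]
    exact continuous_const.upperSemicontinuous.upperSemicontinuousOn _
  push_neg at hbase
  obtain ⟨hv0, hN0⟩ := hbase
  have hv0' : 0 < v := lt_of_le_of_ne hv.1 (Ne.symm hv0)
  have hN1 : 1 ≤ (N : ℝ) := by exact_mod_cast Nat.one_le_iff_ne_zero.mpr hN0
  set h : ℝ → ℝ := fun θ => v ^ (θ - 1) * (1 - v) ^ ((N:ℝ) - θ) *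
      (Real.Gamma ((N:ℝ) + 1) / (Real.Gamma θ * Real.Gamma ((N:ℝ) - θ + 1))) with hh
  -- fExt agrees with h for 0 < θ < N
  have hfeq : ∀ θ : ℝ, 0 < θ → θ < N → fExt θ v N = h θ := by
    intro θ hθ hθN
    have hb : 0 < (N:ℝ) - θ + 1 := by linarith
    have hbeta : betaFun θ ((N:ℝ) - θ + 1) =
        Real.Gamma θ * Real.Gamma ((N:ℝ) - θ + 1) / Real.Gamma ((N:ℝ) + 1) := by
      rw [betaFun_eq hθ hb]; ring_nf
    have hG1 : Real.Gamma θ ≠ 0 := (Real.Gamma_pos_of_pos hθ).ne'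
    have hG2 : Real.Gamma ((N:ℝ) - θ + 1) ≠ 0 := (Real.Gamma_pos_of_pos hb).ne'
    have hG3 : Real.Gamma ((N:ℝ) + 1) ≠ 0 := (Real.Gamma_pos_of_pos (by linarith)).ne'
    simp only [fExt, hv0, hN0, false_or, or_self, if_false, if_neg, hθN, if_pos, hh]
    rw [hbeta]
    field_simp
  have hval : fExt (N:ℝ) v N = (N:ℝ) * v ^ ((N:ℝ) - 1) := by
    simp [fExt, hv0, hN0, lt_irrefl]
  -- continuity of h at points θ₀ with 0 < θ₀ ≤ N, provided v < 1
  have hcont : v < 1 → ∀ θ₀ : ℝ, 0 < θ₀ → θ₀ ≤ N → ContinuousAt h θ₀ := by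
    intro hv1 θ₀ hθ₀ hθ₀N
    have h1 : ContinuousAt (fun θ : ℝ => v ^ (θ - 1)) θ₀ :=
      (continuousAt_const.rpow (continuousAt_id.sub continuousAt_const) (Or.inl hv0))
    have h2 : ContinuousAt (fun θ : ℝ => (1 - v) ^ ((N:ℝ) - θ)) θ₀ :=
      (continuousAt_const.rpow (continuousAt_const.sub continuousAt_id)
        (Or.inl (by linarith)))
    have h3 : ContinuousAt (fun θ : ℝ => Real.Gamma θ) θ₀ := continuousAt_Gamma' hθ₀
    have h4 : ContinuousAt (fun θ : ℝ => Real.Gamma ((N:ℝ) - θ + 1)) θ₀ := by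
      exact (continuousAt_Gamma' (by linarith)).comp
        (by fun_prop)
    have hG1 : Real.Gamma θ₀ ≠ 0 := (Real.Gamma_pos_of_pos hθ₀).ne'
    have hG2 : Real.Gamma ((N:ℝ) - θ₀ + 1) ≠ 0 :=
      (Real.Gamma_pos_of_pos (by linarith)).ne'
    exact (h1.mul h2).mul (continuousAt_const.div (h3.mul h4) (by positivity))
  have hhN : v < 1 → h (N:ℝ) = (N:ℝ) * v ^ ((N:ℝ) - 1) := by
    intro _
    have hGN : Real.Gamma (N:ℝ) ≠ 0 := (Real.Gamma_pos_of_pos (by linarith)).ne'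
    rw [hh]
    simp only [sub_self, Real.rpow_zero, Real.Gamma_one, mul_one,
      Real.Gamma_add_one (by linarith : (N:ℝ) ≠ 0)]
    field_simp
    rw [zero_add, Real.Gamma_one]
  intro θ₀ hθ₀
  simp only [Set.mem_Ioi] at hθ₀
  rcases lt_trichotomy θ₀ (N:ℝ) with hlt | heq | hgt
  · -- θ₀ < N
    have hmem : Set.Ioo (0:ℝ) (N:ℝ) ∈ nhds θ₀ := isOpen_Ioo.mem_nhds ⟨hθ₀, hlt⟩
    by_cases hv1 : v < 1
    · refine usc_congr ?_ (hfeq θ₀ hθ₀ hlt) ?_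
      · filter_upwards [nhdsWithin_le_nhds hmem] with θ hθ
        exact hfeq θ hθ.1 hθ.2
      · exact ((hcont hv1 θ₀ hθ₀ hlt.le).continuousWithinAt).upperSemicontinuousWithinAt
    · have hv1' : v = 1 := le_antisymm hv.2 (not_lt.mp hv1)
      have hzero : ∀ θ : ℝ, 0 < θ → θ < N → fExt θ v N = 0 := by
        intro θ hθ hθN
        rw [hfeq θ hθ hθN]
        simp only [hh, hv1']
        rw [sub_self, Real.zero_rpow (by linarith : (N:ℝ) - θ ≠ 0)]
        ring
      refine usc_congr (g := fun _ => (0:ℝ)) ?_ (hzero θ₀ hθ₀ hlt) ?_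
      · filter_upwards [nhdsWithin_le_nhds hmem] with θ hθ
        exact hzero θ hθ.1 hθ.2
      · exact continuousWithinAt_const.upperSemicontinuousWithinAt
  · -- θ₀ = N
    have hvalθ : fExt θ₀ v N = (N:ℝ) * v ^ ((N:ℝ) - 1) := by rw [heq]; exact hval
    intro y hy
    replace hy : (N:ℝ) * v ^ ((N:ℝ) - 1) < y := by simpa [hvalθ] using hy
    by_cases hv1 : v < 1
    · have hc := (hcont hv1 θ₀ hθ₀ (le_of_eq heq)).tendsto
      rw [show h θ₀ = (N:ℝ) * v ^ ((N:ℝ) - 1) by rw [heq]; exact hhN hv1] at hc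
      have hev : ∀ᶠ θ in nhds θ₀, h θ < y := hc.eventually_lt_const hy
      filter_upwards [nhdsWithin_le_nhds hev, self_mem_nhdsWithin] with θ hθ hθpos
      show fExt θ v N < y
      by_cases hθN : θ < (N:ℝ)
      · rw [hfeq θ hθpos hθN]; exact hθ
      · have : fExt θ v N = (N:ℝ) * v ^ ((N:ℝ) - 1) := by
          simp [fExt, hv0, hN0, hθN]
        rw [this]; exact hy
    · have hv1' : v = 1 := le_antisymm hv.2 (not_lt.mp hv1)
      have hy' : (N:ℝ) < y := by
        rw [hv1'] at hy; simpa using hy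
      filter_upwards [self_mem_nhdsWithin] with θ hθpos
      show fExt θ v N < y
      have hθpos' : (0:ℝ) < θ := hθpos
      by_cases hθN : θ < (N:ℝ)
      · rw [hfeq θ hθpos' hθN]
        simp only [hh, hv1']
        rw [sub_self, Real.zero_rpow (by linarith : (N:ℝ) - θ ≠ 0)]
        simp only [mul_zero, zero_mul]
        linarith
      · have : fExt θ v N = (N:ℝ) * v ^ ((N:ℝ) - 1) := by
          simp [fExt, hv0, hN0, hθN]
        rw [this, hv1', Real.one_rpow, mul_one]
        linarith
  · -- θ₀ > N
    have hmem : Set.Ioi ((N:ℝ)) ∈ nhds θ₀ := isOpen_Ioi.mem_nhds hgt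
    have hconst : ∀ θ : ℝ, (N:ℝ) ≤ θ → fExt θ v N = (N:ℝ) * v ^ ((N:ℝ) - 1) := by
      intro θ hθ
      simp [fExt, hv0, hN0, not_lt.mpr hθ]
    refine usc_congr (g := fun _ => (N:ℝ) * v ^ ((N:ℝ) - 1)) ?_ (hconst θ₀ hgt.le) ?_
    · filter_upwards [nhdsWithin_le_nhds hmem] with θ hθ
      exact hconst θ (le_of_lt hθ)
    · exact continuousWithinAt_const.upperSemicontinuousWithinAt
end

section
/- Fix θ₀ > 0 and an integer N with N > θ₀. Define for θ ∈ (0, N] the function ℓ_N(θ) = (θ−1)Ψ(θ₀) + (N−θ)Ψ(N−θ₀+1) − log Γ(θ) − log Γ(N−θ+1) + log Γ(N+1) − (N−1)Ψ(N+1). Then ℓ_N is strictly concave on (0, N] and its derivative vanishes at θ = θ₀; consequently θ₀ is the unique maximizer of ℓ_N on (0, N]. -/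
open Real Set

noncomputable def digamma (z : ℝ) : ℝ := deriv (fun x => Real.log (Real.Gamma x)) z

private lemma strictConvexOn_congr_aux {s : Set ℝ} {f g : ℝ → ℝ}
    (hf : StrictConvexOn ℝ s f) (h : Set.EqOn f g s) : StrictConvexOn ℝ s g := by
  refine ⟨hf.1, fun x hx y hy hxy a b ha hb hab => ?_⟩
  rw [← h hx, ← h hy, ← h (hf.1 hx hy ha.le hb.le hab)]
  exact hf.2 hx hy hxy ha hb hab

private lemma convexOn_logGamma_shift :
    ConvexOn ℝ (Set.Ioi (0:ℝ)) (fun x : ℝ => Real.log (Real.Gamma (x + 1))) := by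
  refine ⟨convex_Ioi 0, fun x hx y hy a b ha hb hab => ?_⟩
  simp only [mem_Ioi] at hx hy
  have hx1 : x + 1 ∈ Set.Ioi (0:ℝ) := by simp; linarith
  have hy1 : y + 1 ∈ Set.Ioi (0:ℝ) := by simp; linarith
  have := Real.convexOn_log_Gamma.2 hx1 hy1 ha hb hab
  simp only [smul_eq_mul, Function.comp_apply] at this ⊢
  have heq : a * (x + 1) + b * (y + 1) = a * x + b * y + 1 := by linarith
  rwa [heq] at this

private lemma strictConvexOn_logGamma :
    StrictConvexOn ℝ (Set.Ioi (0:ℝ)) (fun x : ℝ => Real.log (Real.Gamma x)) := by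
  have h2 : StrictConvexOn ℝ (Set.Ioi (0:ℝ)) (fun x : ℝ => -Real.log x) :=
    strictConcaveOn_log_Ioi.neg
  have hsum := convexOn_logGamma_shift.add_strictConvexOn h2
  refine strictConvexOn_congr_aux hsum fun x hx => ?_
  simp only [mem_Ioi] at hx
  have := Real.Gamma_add_one (ne_of_gt hx)
  simp only [Pi.add_apply]
  rw [this, Real.log_mul (ne_of_gt hx) (ne_of_gt (Real.Gamma_pos_of_pos hx))]
  ring

private lemma diffAt_logGamma {x : ℝ} (hx : 0 < x) :
    DifferentiableAt ℝ (fun x : ℝ => Real.log (Real.Gamma x)) x := by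
  have hne : ∀ m : ℕ, x ≠ -m := fun m => by
    have : (0:ℝ) ≤ (m:ℝ) := Nat.cast_nonneg m
    intro h; rw [h] at hx; linarith
  exact (Real.differentiableAt_Gamma hne).log (Real.Gamma_ne_zero hne)

private lemma hasDerivAt_logGamma {x : ℝ} (hx : 0 < x) :
    HasDerivAt (fun x : ℝ => Real.log (Real.Gamma x)) (digamma x) x :=
  (diffAt_logGamma hx).hasDerivAt

theorem ellN_strictConcave_max (θ₀ : ℝ) (hθ₀ : 0 < θ₀) (N : ℕ) (hN : θ₀ < (N : ℝ)) :
    StrictConcaveOn ℝ (Set.Ioc (0:ℝ) (N:ℝ))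
      (fun θ : ℝ => (θ - 1) * digamma θ₀ + ((N:ℝ) - θ) * digamma ((N:ℝ) - θ₀ + 1)
        - Real.log (Real.Gamma θ) - Real.log (Real.Gamma ((N:ℝ) - θ + 1))
        + Real.log (Real.Gamma ((N:ℝ) + 1)) - ((N:ℝ) - 1) * digamma ((N:ℝ) + 1)) ∧
    deriv (fun θ : ℝ => (θ - 1) * digamma θ₀ + ((N:ℝ) - θ) * digamma ((N:ℝ) - θ₀ + 1)
        - Real.log (Real.Gamma θ) - Real.log (Real.Gamma ((N:ℝ) - θ + 1))
        + Real.log (Real.Gamma ((N:ℝ) + 1)) - ((N:ℝ) - 1) * digamma ((N:ℝ) + 1)) θ₀ = 0 ∧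
    ∀ θ ∈ Set.Ioc (0:ℝ) (N:ℝ), θ ≠ θ₀ →
      ((θ - 1) * digamma θ₀ + ((N:ℝ) - θ) * digamma ((N:ℝ) - θ₀ + 1)
        - Real.log (Real.Gamma θ) - Real.log (Real.Gamma ((N:ℝ) - θ + 1))
        + Real.log (Real.Gamma ((N:ℝ) + 1)) - ((N:ℝ) - 1) * digamma ((N:ℝ) + 1))
      < ((θ₀ - 1) * digamma θ₀ + ((N:ℝ) - θ₀) * digamma ((N:ℝ) - θ₀ + 1)
        - Real.log (Real.Gamma θ₀) - Real.log (Real.Gamma ((N:ℝ) - θ₀ + 1))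
        + Real.log (Real.Gamma ((N:ℝ) + 1)) - ((N:ℝ) - 1) * digamma ((N:ℝ) + 1)) := by
  set c1 : ℝ := digamma θ₀ with hc1
  set c2 : ℝ := digamma ((N:ℝ) - θ₀ + 1) with hc2
  set f : ℝ → ℝ := fun θ : ℝ => (θ - 1) * c1 + ((N:ℝ) - θ) * c2
        - Real.log (Real.Gamma θ) - Real.log (Real.Gamma ((N:ℝ) - θ + 1))
        + Real.log (Real.Gamma ((N:ℝ) + 1)) - ((N:ℝ) - 1) * digamma ((N:ℝ) + 1) with hfdef
  -- strict concavity
  have hconc : StrictConcaveOn ℝ (Set.Ioc (0:ℝ) (N:ℝ)) f := by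
    have hsub : Set.Ioc (0:ℝ) (N:ℝ) ⊆ Set.Ioi (0:ℝ) := Ioc_subset_Ioi_self
    have h1 : StrictConcaveOn ℝ (Set.Ioc (0:ℝ) (N:ℝ))
        (fun θ : ℝ => -Real.log (Real.Gamma θ)) :=
      (strictConvexOn_logGamma.neg).subset hsub (convex_Ioc _ _)
    have h2 : ConcaveOn ℝ (Set.Ioc (0:ℝ) (N:ℝ))
        (fun θ : ℝ => -Real.log (Real.Gamma ((N:ℝ) - θ + 1))) := by
      refine ⟨convex_Ioc _ _, fun x hx y hy a b ha hb hab => ?_⟩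
      obtain ⟨hx0, hxN⟩ := hx
      obtain ⟨hy0, hyN⟩ := hy
      have hx1 : (N:ℝ) - x + 1 ∈ Set.Ioi (0:ℝ) := by simp; linarith
      have hy1 : (N:ℝ) - y + 1 ∈ Set.Ioi (0:ℝ) := by simp; linarith
      have := (Real.convexOn_log_Gamma.neg).2 hx1 hy1 ha hb hab
      simp only [smul_eq_mul, Pi.neg_apply, Function.comp_apply] at this ⊢
      have heq : a * ((N:ℝ) - x + 1) + b * ((N:ℝ) - y + 1)
          = (N:ℝ) - (a * x + b * y) + 1 := by linear_combination ((N:ℝ) + 1) * hab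
      rwa [heq] at this
    have h3 : ConcaveOn ℝ (Set.Ioc (0:ℝ) (N:ℝ))
        (fun θ : ℝ => (θ - 1) * c1 + ((N:ℝ) - θ) * c2
          + (Real.log (Real.Gamma ((N:ℝ) + 1)) - ((N:ℝ) - 1) * digamma ((N:ℝ) + 1))) := by
      refine ⟨convex_Ioc _ _, fun x hx y hy a b ha hb hab => ?_⟩
      apply le_of_eq
      simp only [smul_eq_mul]
      linear_combination (-c1 + (N:ℝ) * c2
        + (Real.log (Real.Gamma ((N:ℝ) + 1)) - ((N:ℝ) - 1) * digamma ((N:ℝ) + 1))) * hab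
    have hsum := (h1.add_concaveOn h2).add_concaveOn h3
    have heq : f = (fun θ : ℝ => -Real.log (Real.Gamma θ))
        + (fun θ : ℝ => -Real.log (Real.Gamma ((N:ℝ) - θ + 1)))
        + (fun θ : ℝ => (θ - 1) * c1 + ((N:ℝ) - θ) * c2
          + (Real.log (Real.Gamma ((N:ℝ) + 1)) - ((N:ℝ) - 1) * digamma ((N:ℝ) + 1))) := by
      funext θ
      simp only [Pi.add_apply, hfdef]
      ring
    rwa [heq]
  -- derivative
  have hderivAt : ∀ θ : ℝ, 0 < θ → θ < (N:ℝ) + 1 →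
      HasDerivAt f (c1 - c2 - digamma θ + digamma ((N:ℝ) - θ + 1)) θ := by
    intro θ hθ hθN
    have h1 : HasDerivAt (fun x : ℝ => (x - 1) * c1) (1 * c1) θ :=
      ((hasDerivAt_id θ).sub_const 1).mul_const c1
    have h2 : HasDerivAt (fun x : ℝ => ((N:ℝ) - x) * c2) (-1 * c2) θ :=
      (((hasDerivAt_id θ).const_sub ((N:ℝ))).mul_const c2)
    have hf1 : HasDerivAt (fun x : ℝ => Real.log (Real.Gamma x)) (digamma θ) θ :=
      hasDerivAt_logGamma hθ
    have hu : HasDerivAt (fun x : ℝ => (N:ℝ) - x + 1) (-1) θ :=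
      ((hasDerivAt_id θ).const_sub ((N:ℝ))).add_const 1
    have houter : HasDerivAt (fun x : ℝ => Real.log (Real.Gamma x))
        (digamma ((N:ℝ) - θ + 1)) ((N:ℝ) - θ + 1) :=
      hasDerivAt_logGamma (by linarith)
    have hcomp : HasDerivAt (fun x : ℝ => Real.log (Real.Gamma ((N:ℝ) - x + 1)))
        (digamma ((N:ℝ) - θ + 1) * (-1)) θ := by have := houter.comp θ hu; exact this
    have htot := ((((h1.add h2).sub hf1).sub hcomp).add_const
        (Real.log (Real.Gamma ((N:ℝ) + 1)))).sub_const (((N:ℝ) - 1) * digamma ((N:ℝ) + 1))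
    refine htot.congr_deriv ?_
    ring
  have hd0 : HasDerivAt f 0 θ₀ := by
    have := hderivAt θ₀ hθ₀ (by linarith)
    have heq : c1 - c2 - digamma θ₀ + digamma ((N:ℝ) - θ₀ + 1) = 0 := by
      rw [hc1, hc2]; ring
    rwa [heq] at this
  have hθ₀mem : θ₀ ∈ Set.Ioc (0:ℝ) (N:ℝ) := ⟨hθ₀, le_of_lt hN⟩
  refine ⟨hconc, hd0.deriv, ?_⟩
  intro θ hθmem hne
  have key : f θ < f θ₀ := by
    rcases lt_or_gt_of_ne hne with h | h
    · have hs := hconc.lt_slope_of_hasDerivAt hθmem hθ₀mem h hd0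
      rw [slope_def_field] at hs
      rw [div_pos_iff] at hs
      rcases hs with ⟨h1, h2⟩ | ⟨h1, h2⟩ <;> linarith
    · have hs := hconc.slope_lt_of_hasDerivAt hθ₀mem hθmem h hd0
      rw [slope_def_field] at hs
      rw [div_neg_iff] at hs
      rcases hs with ⟨h1, h2⟩ | ⟨h1, h2⟩ <;> linarith
  exact key
end
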